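/- Let K be a positive definite kernel with RKHS H_K, sample x₁,...,xₙ, and let F = { f ∈ span{K(·,xᵢ)} : ‖f‖_{H_K} ≤ μ }. Let Y₁,...,Y_u be i.i.d. uniform on [n] and σᵢ i.i.d. Rademacher. Then for every r > 0 and every 0 ≤ Q ≤ n: E[ sup_{f ∈ F, T_n(f) ≤ r} (1/u) ∑_{i=1}^u σᵢ f(x_{Yᵢ}) ] ≤ √(rQ/u) + μ √( (∑_{q=Q+1}^{n} λ̂_q)/u ), where λ̂₁ ≥ ... ≥ λ̂ₙ are the eigenvalues of (1/n)·(K(xᵢ,xⱼ))_{i,j} and T_n(f) = (1/n)∑ᵢ f(xᵢ)². -/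

import Mathlib

open scoped RealInnerProductSpace

open Finset

/-- Cauchy–Schwarz with square roots. -/
lemma klrb_cs {ι : Type*} (s : Finset ι) (f g : ι → ℝ) :
    ∑ i ∈ s, f i * g i ≤ Real.sqrt (∑ i ∈ s, f i ^ 2) * Real.sqrt (∑ i ∈ s, g i ^ 2) := by
  have h := s.sum_mul_sq_le_sq_mul_sq f g
  have h1 : (0:ℝ) ≤ ∑ i ∈ s, f i ^ 2 := sum_nonneg fun i _ => sq_nonneg _
  calc ∑ i ∈ s, f i * g i ≤ |∑ i ∈ s, f i * g i| := le_abs_self _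
    _ = Real.sqrt ((∑ i ∈ s, f i * g i) ^ 2) := (Real.sqrt_sq_eq_abs _).symm
    _ ≤ Real.sqrt ((∑ i ∈ s, f i ^ 2) * ∑ i ∈ s, g i ^ 2) := Real.sqrt_le_sqrt h
    _ = _ := Real.sqrt_mul h1 _

/-- Jensen-type: sum of square roots. -/
lemma klrb_jensen {ι : Type*} [Fintype ι] (X : ι → ℝ) (hX : ∀ i, 0 ≤ X i) :
    ∑ i : ι, Real.sqrt (X i)
      ≤ Real.sqrt (Fintype.card ι) * Real.sqrt (∑ i : ι, X i) := by
  have h := klrb_cs (Finset.univ : Finset ι) (fun _ => 1) (fun i => Real.sqrt (X i))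
  simpa [Real.sq_sqrt, hX] using h

/-- Key combinatorial identity. -/
lemma klrb_key {α : Type*} [Fintype α] (g : α → ℝ) (hg : ∑ a : α, g a = 0) :
    ∀ u : ℕ, (∑ z : Fin u → α, (∑ i, g (z i)) ^ 2) * (Fintype.card α : ℝ)
      = u * (Fintype.card α : ℝ) ^ u * ∑ a : α, g a ^ 2 := by
  intro u
  induction u with
  | zero => simp
  | succ m ih =>
    have step : (∑ z : Fin (m+1) → α, (∑ i, g (z i)) ^ 2)
        = (Fintype.card α : ℝ) ^ m * (∑ a : α, g a ^ 2)
          + (Fintype.card α : ℝ) * ∑ z : Fin m → α, (∑ i, g (z i)) ^ 2 := by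
      have e1 : (∑ z : Fin (m+1) → α, (∑ i, g (z i)) ^ 2)
          = ∑ p : α × (Fin m → α), (g p.1 + ∑ i, g (p.2 i)) ^ 2 := by
        refine (Fintype.sum_equiv (Fin.consEquiv fun _ : Fin (m+1) => α) _ _ ?_).symm
        intro p
        simp [Fin.sum_univ_succ, Fin.consEquiv]
      rw [e1, Fintype.sum_prod_type]
      have e2 : ∀ a : α, ∑ w : Fin m → α, (g a + ∑ i, g (w i)) ^ 2
          = (Fintype.card α : ℝ) ^ m * g a ^ 2
            + 2 * g a * (∑ w : Fin m → α, ∑ i, g (w i))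
            + ∑ w : Fin m → α, (∑ i, g (w i)) ^ 2 := by
        intro a
        have : ∀ w : Fin m → α, (g a + ∑ i, g (w i)) ^ 2
            = g a ^ 2 + 2 * g a * (∑ i, g (w i)) + (∑ i, g (w i)) ^ 2 := by
          intro w; ring
        rw [Finset.sum_congr rfl fun w _ => this w]
        simp [Finset.sum_add_distrib, ← Finset.mul_sum, Finset.card_univ, mul_comm]
      rw [Finset.sum_congr rfl fun a _ => e2 a]
      simp only [Finset.sum_add_distrib, ← Finset.sum_mul, ← Finset.mul_sum]
      rw [hg]
      simp [Finset.card_univ, ← Finset.sum_mul, mul_comm]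
    rw [step]
    push_cast
    linear_combination (Fintype.card α : ℝ) * ih

lemma klrb_double (n u : ℕ) (c : Fin n → ℝ) :
    (∑ Y : Fin u → Fin n, ∑ σ : Fin u → Bool,
        (∑ i, (if σ i then (1:ℝ) else -1) * c (Y i)) ^ 2) * (2 * n)
      = u * (2 * n) ^ u * (2 * ∑ j, c j ^ 2) := by
  set g : Fin n × Bool → ℝ := fun p => (if p.2 then (1:ℝ) else -1) * c p.1 with hgdef
  have hg : ∑ p : Fin n × Bool, g p = 0 := by
    rw [Fintype.sum_prod_type]
    simp [hgdef]
  have hg2 : ∑ p : Fin n × Bool, g p ^ 2 = 2 * ∑ j, c j ^ 2 := by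
    rw [Fintype.sum_prod_type]
    simp only [hgdef]
    rw [Finset.mul_sum]
    refine Finset.sum_congr rfl fun v _ => ?_
    simp
  have hcard : (Fintype.card (Fin n × Bool) : ℝ) = 2 * n := by
    simp [mul_comm]
  have key := klrb_key g hg u
  rw [hcard, hg2] at key
  have e : (∑ z : Fin u → Fin n × Bool, (∑ i, g (z i)) ^ 2)
      = ∑ Y : Fin u → Fin n, ∑ σ : Fin u → Bool,
          (∑ i, (if σ i then (1:ℝ) else -1) * c (Y i)) ^ 2 := by
    calc (∑ z : Fin u → Fin n × Bool, (∑ i, g (z i)) ^ 2)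
        = ∑ p : (Fin u → Fin n) × (Fin u → Bool),
            (∑ i, (if p.2 i then (1:ℝ) else -1) * c (p.1 i)) ^ 2 :=
          Fintype.sum_equiv (Equiv.arrowProdEquivProdArrow (Fin u) (fun _ => Fin n) (fun _ => Bool)) _ _
            (fun z => rfl)
      _ = _ := Fintype.sum_prod_type _
  rw [e] at key
  exact key

lemma klrb_card_filter (n Q : ℕ) (hQ : Q ≤ n) :
    (Finset.univ.filter fun q : Fin n => ¬ Q ≤ (q:ℕ)).card = Q := by
  have h : (Finset.univ.filter fun q : Fin n => ¬ Q ≤ (q:ℕ))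
      = Finset.map (Fin.castLEEmb hQ) Finset.univ := by
    ext q
    simp only [Finset.mem_filter, Finset.mem_univ, true_and, Finset.mem_map]
    constructor
    · intro h
      exact ⟨⟨(q:ℕ), by omega⟩, by ext; simp [Fin.castLEEmb]⟩
    · rintro ⟨p, rfl⟩
      simp only [Fin.castLEEmb, Fin.coe_castLE, OrderEmbedding.coe_ofStrictMono,
        Function.Embedding.coeFn_mk]
      omega
  rw [h, Finset.card_map, Finset.card_univ, Fintype.card_fin]

lemma klrb_avg_sqrt {ι : Type*} [Fintype ι] (X : ι → ℝ) (hX : ∀ i, 0 ≤ X i)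
    (hpos : 0 < (Fintype.card ι : ℝ)) :
    (∑ i, Real.sqrt (X i)) / (Fintype.card ι : ℝ)
      ≤ Real.sqrt ((∑ i, X i) / (Fintype.card ι : ℝ)) := by
  have h := klrb_jensen X hX
  have hS : (0:ℝ) ≤ ∑ i, X i := Finset.sum_nonneg fun i _ => hX i
  calc (∑ i, Real.sqrt (X i)) / (Fintype.card ι : ℝ)
      ≤ (Real.sqrt (Fintype.card ι) * Real.sqrt (∑ i, X i)) / (Fintype.card ι : ℝ) := by
        gcongr
    _ = Real.sqrt (∑ i, X i) / Real.sqrt (Fintype.card ι) := by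
        rw [div_eq_div_iff hpos.ne' (Real.sqrt_pos.mpr hpos).ne']
        nlinarith [Real.mul_self_sqrt hpos.le, Real.sqrt_nonneg (∑ i, X i),
          Real.sqrt_nonneg ((Fintype.card ι : ℝ))]
    _ = Real.sqrt ((∑ i, X i) / (Fintype.card ι : ℝ)) := (Real.sqrt_div hS _).symm

lemma klrb_expect (n u : ℕ) (hn : 0 < n) (hu : 0 < u) (c : Fin n → ℝ) :
    ∑ Y : Fin u → Fin n, ∑ σ : Fin u → Bool,
        ((∑ i, (if σ i then (1:ℝ) else -1) * c (Y i)) / u) ^ 2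
      = (n:ℝ) ^ u * 2 ^ u * ((∑ j, c j ^ 2) / (n * u)) := by
  have h := klrb_double n u c
  rw [mul_pow] at h
  have hnR : (0:ℝ) < n := by exact_mod_cast hn
  have huR : (0:ℝ) < u := by exact_mod_cast hu
  have e : ∑ Y : Fin u → Fin n, ∑ σ : Fin u → Bool,
        ((∑ i, (if σ i then (1:ℝ) else -1) * c (Y i)) / u) ^ 2
      = (∑ Y : Fin u → Fin n, ∑ σ : Fin u → Bool,
          (∑ i, (if σ i then (1:ℝ) else -1) * c (Y i)) ^ 2) / (u:ℝ)^2 := by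
    simp [div_pow, ← Finset.sum_div]
  rw [e]
  set S := ∑ Y : Fin u → Fin n, ∑ σ : Fin u → Bool,
      (∑ i, (if σ i then (1:ℝ) else -1) * c (Y i)) ^ 2 with hS
  set G := ∑ j, c j ^ 2 with hG
  field_simp
  linear_combination (1/2 : ℝ) * h


/-- Kernel local Rademacher complexity bound: the Rademacher average of the
localized RKHS ball {f : ‖f‖ ≤ μ, T_n(f) ≤ r} is bounded by
√(rQ/u) + μ√((∑_{q>Q} λ̂_q)/u) for every 0 ≤ Q ≤ n. -/
theorem kernel_local_rademacher_bound {H : Type*} [NormedAddCommGroup H]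
    [InnerProductSpace ℝ H]
    (n u : ℕ) (hn : 0 < n) (hu : 0 < u)
    (k : Fin n → H) (Φ : Fin n → H) (lam : Fin n → ℝ)
    (hlam : ∀ q, 0 < lam q)
    (hmono : ∀ p q : Fin n, p ≤ q → lam q ≤ lam p)
    (horth : Orthonormal ℝ Φ)
    (heig : ∀ q, (1 / (n : ℝ)) • (∑ i, ⟪Φ q, k i⟫ • k i) = lam q • Φ q)
    (hΦspan : ∀ i, k i ∈ Submodule.span ℝ (Set.range Φ))
    (μ r : ℝ) (hμ : 0 ≤ μ) (hr : 0 < r) (Q : ℕ) (hQ : Q ≤ n) :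
    (∑ Y : Fin u → Fin n, ∑ σ : Fin u → Bool,
        sSup {x : ℝ | ∃ f : H, f ∈ Submodule.span ℝ (Set.range k) ∧ ‖f‖ ≤ μ ∧
          (1 / (n : ℝ)) * ∑ i, ⟪f, k i⟫ ^ 2 ≤ r ∧
          x = (∑ i, (if σ i then (1 : ℝ) else -1) * ⟪f, k (Y i)⟫) / (u : ℝ)})
      / ((n : ℝ) ^ u * 2 ^ u)
    ≤ Real.sqrt (r * Q / u)
      + μ * Real.sqrt ((∑ q ∈ Finset.univ.filter (fun q : Fin n => Q ≤ (q : ℕ)), lam q)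
          / (u : ℝ)) := by
  classical
  have hnR : (0:ℝ) < n := by exact_mod_cast hn
  have huR : (0:ℝ) < u := by exact_mod_cast hu
  have hNpos : (0:ℝ) < (n:ℝ) ^ u * 2 ^ u := by positivity
  set c : Fin n → Fin n → ℝ := fun q i => ⟪Φ q, k i⟫ with hc
  -- orthogonality relations
  have horthrel : ∀ p q : Fin n, ∑ i, c p i * c q i = if p = q then (n:ℝ) * lam q else 0 := by
    intro p q
    have h2 : ⟪Φ p, (1 / (n : ℝ)) • (∑ i, ⟪Φ q, k i⟫ • k i)⟫ = ⟪Φ p, lam q • Φ q⟫ := by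
      rw [heig q]
    rw [real_inner_smul_right, inner_sum] at h2
    simp only [real_inner_smul_right] at h2
    rw [orthonormal_iff_ite.mp horth p q] at h2
    have h4 : ∑ i, c p i * c q i = ∑ i, c q i * c p i :=
      Finset.sum_congr rfl fun i _ => mul_comm _ _
    rw [h4]
    split_ifs at h2 ⊢ with hpq
    · field_simp at h2
      subst hpq
      linarith [h2]
    · field_simp at h2
      simpa using h2
  have hsumc2 : ∀ q, ∑ i, c q i ^ 2 = (n:ℝ) * lam q := by
    intro q
    simpa [sq] using horthrel q q
  -- decomposition of k
  have hck : ∀ i, k i = ∑ q, c q i • Φ q := by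
    intro i
    obtain ⟨d, hd⟩ := (Submodule.mem_span_range_iff_exists_fun ℝ).mp (hΦspan i)
    have hdq : ∀ q, c q i = d q := by
      intro q
      show ⟪Φ q, k i⟫ = d q
      rw [← hd, inner_sum]
      simp [real_inner_smul_right, orthonormal_iff_ite.mp horth]
    rw [← hd]
    exact Finset.sum_congr rfl fun q _ => by rw [hdq q]
  have hfk : ∀ (f : H) (i : Fin n), ⟪f, k i⟫ = ∑ q, c q i * ⟪f, Φ q⟫ := by
    intro f i
    rw [hck i, inner_sum]
    exact Finset.sum_congr rfl fun q _ => real_inner_smul_right _ _ _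
  -- empirical quadratic form
  have hTn : ∀ f : H, ∑ i, ⟪f, k i⟫ ^ 2 = (n:ℝ) * ∑ q, lam q * ⟪f, Φ q⟫ ^ 2 := by
    intro f
    calc ∑ i, ⟪f, k i⟫ ^ 2
        = ∑ i, ∑ p, ∑ q, (c p i * ⟪f, Φ p⟫) * (c q i * ⟪f, Φ q⟫) := by
          refine Finset.sum_congr rfl fun i _ => ?_
          rw [hfk f i, sq, Finset.sum_mul_sum]
      _ = ∑ p, ∑ q, (⟪f, Φ p⟫ * ⟪f, Φ q⟫) * ∑ i, c p i * c q i := by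
          rw [Finset.sum_comm]
          refine Finset.sum_congr rfl fun p _ => ?_
          rw [Finset.sum_comm]
          refine Finset.sum_congr rfl fun q _ => ?_
          rw [Finset.mul_sum]
          exact Finset.sum_congr rfl fun i _ => by ring
      _ = ∑ p, (⟪f, Φ p⟫ * ⟪f, Φ p⟫) * ((n:ℝ) * lam p) := by
          refine Finset.sum_congr rfl fun p _ => ?_
          rw [Finset.sum_congr rfl fun q _ => by rw [horthrel p q]]
          simp [mul_ite, Finset.sum_ite_eq]
      _ = (n:ℝ) * ∑ q, lam q * ⟪f, Φ q⟫ ^ 2 := by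
          rw [Finset.mul_sum]
          exact Finset.sum_congr rfl fun p _ => by ring
  -- Bessel
  have hBessel : ∀ f : H, ∑ q, ⟪f, Φ q⟫ ^ 2 ≤ ‖f‖ ^ 2 := by
    intro f
    have h := horth.sum_inner_products_le (s := Finset.univ) f
    calc ∑ q, ⟪f, Φ q⟫ ^ 2 = ∑ q, ‖⟪Φ q, f⟫‖ ^ 2 := by
          refine Finset.sum_congr rfl fun q _ => ?_
          rw [real_inner_comm, Real.norm_eq_abs, sq_abs]
      _ ≤ ‖f‖ ^ 2 := h
  -- the random coefficients
  set b : Fin n → (Fin u → Fin n) → (Fin u → Bool) → ℝ :=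
    fun q Y σ => (∑ i, (if σ i then (1:ℝ) else -1) * c q (Y i)) / u with hb
  set A : (Fin u → Fin n) → (Fin u → Bool) → ℝ :=
    fun Y σ => ∑ q ∈ Finset.univ.filter (fun q : Fin n => ¬ Q ≤ (q:ℕ)), b q Y σ ^ 2 / lam q
    with hA
  set B : (Fin u → Fin n) → (Fin u → Bool) → ℝ :=
    fun Y σ => ∑ q ∈ Finset.univ.filter (fun q : Fin n => Q ≤ (q:ℕ)), b q Y σ ^ 2 with hB
  have hA0 : ∀ Y σ, 0 ≤ A Y σ :=
    fun Y σ => Finset.sum_nonneg fun q _ => div_nonneg (sq_nonneg _) (hlam q).le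
  have hB0 : ∀ Y σ, 0 ≤ B Y σ := fun Y σ => Finset.sum_nonneg fun q _ => sq_nonneg _
  -- pointwise bound on the supremum
  have hpoint : ∀ (Y : Fin u → Fin n) (σ : Fin u → Bool),
      sSup {x : ℝ | ∃ f : H, f ∈ Submodule.span ℝ (Set.range k) ∧ ‖f‖ ≤ μ ∧
          (1 / (n : ℝ)) * ∑ i, ⟪f, k i⟫ ^ 2 ≤ r ∧
          x = (∑ i, (if σ i then (1 : ℝ) else -1) * ⟪f, k (Y i)⟫) / (u : ℝ)}
        ≤ Real.sqrt r * Real.sqrt (A Y σ) + μ * Real.sqrt (B Y σ) := by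
    intro Y σ
    have hrhs0 : 0 ≤ Real.sqrt r * Real.sqrt (A Y σ) + μ * Real.sqrt (B Y σ) := by
      have h1 := mul_nonneg (Real.sqrt_nonneg r) (Real.sqrt_nonneg (A Y σ))
      have h2 := mul_nonneg hμ (Real.sqrt_nonneg (B Y σ))
      linarith
    apply Real.sSup_le _ hrhs0
    rintro x ⟨f, hfspan, hfnorm, hfT, rfl⟩
    set a : Fin n → ℝ := fun q => ⟪f, Φ q⟫ with ha
    -- rewrite the Rademacher sum in eigencoordinates
    have hx : (∑ i, (if σ i then (1:ℝ) else -1) * ⟪f, k (Y i)⟫) / (u:ℝ)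
        = ∑ q, a q * b q Y σ := by
      have e1 : (∑ i, (if σ i then (1:ℝ) else -1) * ⟪f, k (Y i)⟫)
          = ∑ q, a q * (∑ i, (if σ i then (1:ℝ) else -1) * c q (Y i)) := by
        calc ∑ i, (if σ i then (1:ℝ) else -1) * ⟪f, k (Y i)⟫
            = ∑ i, ∑ q, (if σ i then (1:ℝ) else -1) * (c q (Y i) * a q) := by
              refine Finset.sum_congr rfl fun i _ => ?_
              rw [hfk f (Y i), Finset.mul_sum]
          _ = ∑ q, ∑ i, (if σ i then (1:ℝ) else -1) * (c q (Y i) * a q) :=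
              Finset.sum_comm
          _ = ∑ q, a q * (∑ i, (if σ i then (1:ℝ) else -1) * c q (Y i)) := by
              refine Finset.sum_congr rfl fun q _ => ?_
              rw [Finset.mul_sum]
              exact Finset.sum_congr rfl fun i _ => by ring
      rw [e1, Finset.sum_div]
      exact Finset.sum_congr rfl fun q _ => (mul_div_assoc _ _ _)
    rw [hx]
    -- split into head and tail eigendirections
    rw [← Finset.sum_filter_add_sum_filter_not Finset.univ (fun q : Fin n => Q ≤ (q:ℕ))
      (fun q => a q * b q Y σ)]
    -- total empirical energy
    have hTle : ∑ q, lam q * a q ^ 2 ≤ r := by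
      have h1 := hfT
      rw [hTn f] at h1
      have h2 : (1 / (n:ℝ)) * ((n:ℝ) * ∑ q, lam q * a q ^ 2) = ∑ q, lam q * a q ^ 2 := by
        field_simp
      rw [h2] at h1
      exact h1
    have haμ : ∑ q, a q ^ 2 ≤ μ ^ 2 := by
      refine le_trans (hBessel f) ?_
      have := pow_le_pow_left₀ (norm_nonneg f) hfnorm 2
      simpa using this
    -- tail bound
    have hpart2 : ∑ q ∈ Finset.univ.filter (fun q : Fin n => Q ≤ (q:ℕ)), a q * b q Y σ
        ≤ μ * Real.sqrt (B Y σ) := by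
      refine le_trans (klrb_cs _ a (fun q => b q Y σ)) ?_
      have hBdef : ∑ q ∈ Finset.univ.filter (fun q : Fin n => Q ≤ (q:ℕ)), b q Y σ ^ 2
          = B Y σ := rfl
      rw [hBdef]
      refine mul_le_mul_of_nonneg_right ?_ (Real.sqrt_nonneg _)
      have hsub : ∑ q ∈ Finset.univ.filter (fun q : Fin n => Q ≤ (q:ℕ)), a q ^ 2 ≤ μ ^ 2 :=
        le_trans (Finset.sum_le_sum_of_subset_of_nonneg (Finset.filter_subset _ _)
          (fun q _ _ => sq_nonneg _)) haμ
      calc Real.sqrt (∑ q ∈ Finset.univ.filter (fun q : Fin n => Q ≤ (q:ℕ)), a q ^ 2)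
          ≤ Real.sqrt (μ ^ 2) := Real.sqrt_le_sqrt hsub
        _ = μ := Real.sqrt_sq hμ
    -- head bound
    have hpart1 : ∑ q ∈ Finset.univ.filter (fun q : Fin n => ¬ Q ≤ (q:ℕ)), a q * b q Y σ
        ≤ Real.sqrt r * Real.sqrt (A Y σ) := by
      have e2 : ∑ q ∈ Finset.univ.filter (fun q : Fin n => ¬ Q ≤ (q:ℕ)), a q * b q Y σ
          = ∑ q ∈ Finset.univ.filter (fun q : Fin n => ¬ Q ≤ (q:ℕ)),
              (Real.sqrt (lam q) * a q) * (b q Y σ / Real.sqrt (lam q)) := by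
        refine Finset.sum_congr rfl fun q _ => ?_
        have hsq : Real.sqrt (lam q) ≠ 0 := (Real.sqrt_pos.mpr (hlam q)).ne'
        field_simp
      rw [e2]
      refine le_trans (klrb_cs _ _ _) ?_
      have h1 : ∑ q ∈ Finset.univ.filter (fun q : Fin n => ¬ Q ≤ (q:ℕ)),
          (Real.sqrt (lam q) * a q) ^ 2
          = ∑ q ∈ Finset.univ.filter (fun q : Fin n => ¬ Q ≤ (q:ℕ)), lam q * a q ^ 2 := by
        refine Finset.sum_congr rfl fun q _ => ?_
        rw [mul_pow, Real.sq_sqrt (hlam q).le]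
      have h2 : ∑ q ∈ Finset.univ.filter (fun q : Fin n => ¬ Q ≤ (q:ℕ)),
          (b q Y σ / Real.sqrt (lam q)) ^ 2 = A Y σ := by
        refine Finset.sum_congr rfl fun q _ => ?_
        rw [div_pow, Real.sq_sqrt (hlam q).le]
      rw [h1, h2]
      refine mul_le_mul_of_nonneg_right ?_ (Real.sqrt_nonneg _)
      have hsub : ∑ q ∈ Finset.univ.filter (fun q : Fin n => ¬ Q ≤ (q:ℕ)), lam q * a q ^ 2 ≤ r :=
        le_trans (Finset.sum_le_sum_of_subset_of_nonneg (Finset.filter_subset _ _)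
          (fun q _ _ => mul_nonneg (hlam q).le (sq_nonneg _))) hTle
      exact Real.sqrt_le_sqrt hsub
    linarith
  -- averaging
  have hbsum : ∀ q : Fin n, ∑ Y : Fin u → Fin n, ∑ σ : Fin u → Bool, b q Y σ ^ 2
      = (n:ℝ) ^ u * 2 ^ u * (lam q / u) := by
    intro q
    have h := klrb_expect n u hn hu (c q)
    rw [hsumc2 q] at h
    have e : ∑ Y : Fin u → Fin n, ∑ σ : Fin u → Bool, b q Y σ ^ 2
        = ∑ Y : Fin u → Fin n, ∑ σ : Fin u → Bool,
            ((∑ i, (if σ i then (1:ℝ) else -1) * c q (Y i)) / u) ^ 2 := rfl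
    rw [e, h]
    congr 1
    exact mul_div_mul_left _ _ hnR.ne'
  have hswapA : ∑ Y : Fin u → Fin n, ∑ σ : Fin u → Bool, A Y σ
      = ∑ q ∈ Finset.univ.filter (fun q : Fin n => ¬ Q ≤ (q:ℕ)),
          (∑ Y : Fin u → Fin n, ∑ σ : Fin u → Bool, b q Y σ ^ 2) / lam q := by
    simp only [hA]
    calc ∑ Y : Fin u → Fin n, ∑ σ : Fin u → Bool,
            ∑ q ∈ Finset.univ.filter (fun q : Fin n => ¬ Q ≤ (q:ℕ)), b q Y σ ^ 2 / lam q
        = ∑ Y : Fin u → Fin n, ∑ q ∈ Finset.univ.filter (fun q : Fin n => ¬ Q ≤ (q:ℕ)),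
            ∑ σ : Fin u → Bool, b q Y σ ^ 2 / lam q :=
          Finset.sum_congr rfl fun Y _ => Finset.sum_comm
      _ = ∑ q ∈ Finset.univ.filter (fun q : Fin n => ¬ Q ≤ (q:ℕ)),
            ∑ Y : Fin u → Fin n, ∑ σ : Fin u → Bool, b q Y σ ^ 2 / lam q := Finset.sum_comm
      _ = _ := by
          refine Finset.sum_congr rfl fun q _ => ?_
          simp [Finset.sum_div]
  have hEA : (∑ Y : Fin u → Fin n, ∑ σ : Fin u → Bool, A Y σ) / ((n:ℝ) ^ u * 2 ^ u)
      = (Q : ℝ) / u := by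
    rw [hswapA]
    have e : ∀ q ∈ Finset.univ.filter (fun q : Fin n => ¬ Q ≤ (q:ℕ)),
        (∑ Y : Fin u → Fin n, ∑ σ : Fin u → Bool, b q Y σ ^ 2) / lam q
          = (n:ℝ) ^ u * 2 ^ u * (1 / u) := by
      intro q _
      rw [hbsum q]
      rw [mul_div_assoc]
      congr 1
      rw [div_div, mul_comm ((u:ℝ)) (lam q), ← div_div, div_self (hlam q).ne']
    rw [Finset.sum_congr rfl e, Finset.sum_const, klrb_card_filter n Q hQ]
    simp only [nsmul_eq_mul]
    field_simp
  have hswapB : ∑ Y : Fin u → Fin n, ∑ σ : Fin u → Bool, B Y σ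
      = ∑ q ∈ Finset.univ.filter (fun q : Fin n => Q ≤ (q:ℕ)),
          (∑ Y : Fin u → Fin n, ∑ σ : Fin u → Bool, b q Y σ ^ 2) := by
    simp only [hB]
    calc ∑ Y : Fin u → Fin n, ∑ σ : Fin u → Bool,
            ∑ q ∈ Finset.univ.filter (fun q : Fin n => Q ≤ (q:ℕ)), b q Y σ ^ 2
        = ∑ Y : Fin u → Fin n, ∑ q ∈ Finset.univ.filter (fun q : Fin n => Q ≤ (q:ℕ)),
            ∑ σ : Fin u → Bool, b q Y σ ^ 2 :=
          Finset.sum_congr rfl fun Y _ => Finset.sum_comm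
      _ = _ := Finset.sum_comm
  have hEB : (∑ Y : Fin u → Fin n, ∑ σ : Fin u → Bool, B Y σ) / ((n:ℝ) ^ u * 2 ^ u)
      = (∑ q ∈ Finset.univ.filter (fun q : Fin n => Q ≤ (q:ℕ)), lam q) / u := by
    rw [hswapB]
    have e : ∀ q ∈ Finset.univ.filter (fun q : Fin n => Q ≤ (q:ℕ)),
        (∑ Y : Fin u → Fin n, ∑ σ : Fin u → Bool, b q Y σ ^ 2)
          = (n:ℝ) ^ u * 2 ^ u * (lam q / u) := fun q _ => hbsum q
    rw [Finset.sum_congr rfl e, ← Finset.mul_sum]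
    rw [mul_comm, mul_div_assoc, div_self hNpos.ne', mul_one, ← Finset.sum_div]
  -- Jensen on averages
  have hcardP : ((Fintype.card ((Fin u → Fin n) × (Fin u → Bool)) : ℕ) : ℝ)
      = (n:ℝ) ^ u * 2 ^ u := by
    simp [Fintype.card_prod, Fintype.card_fun]
  have hJA : (∑ Y : Fin u → Fin n, ∑ σ : Fin u → Bool, Real.sqrt (A Y σ))
        / ((n:ℝ) ^ u * 2 ^ u)
      ≤ Real.sqrt ((∑ Y : Fin u → Fin n, ∑ σ : Fin u → Bool, A Y σ) / ((n:ℝ) ^ u * 2 ^ u)) := by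
    have h := klrb_avg_sqrt (ι := (Fin u → Fin n) × (Fin u → Bool))
      (fun p => A p.1 p.2) (fun p => hA0 p.1 p.2) (by rw [hcardP]; exact hNpos)
    rwa [Fintype.sum_prod_type, Fintype.sum_prod_type, hcardP] at h
  have hJB : (∑ Y : Fin u → Fin n, ∑ σ : Fin u → Bool, Real.sqrt (B Y σ))
        / ((n:ℝ) ^ u * 2 ^ u)
      ≤ Real.sqrt ((∑ Y : Fin u → Fin n, ∑ σ : Fin u → Bool, B Y σ) / ((n:ℝ) ^ u * 2 ^ u)) := by
    have h := klrb_avg_sqrt (ι := (Fin u → Fin n) × (Fin u → Bool))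
      (fun p => B p.1 p.2) (fun p => hB0 p.1 p.2) (by rw [hcardP]; exact hNpos)
    rwa [Fintype.sum_prod_type, Fintype.sum_prod_type, hcardP] at h
  -- put everything together
  calc (∑ Y : Fin u → Fin n, ∑ σ : Fin u → Bool,
        sSup {x : ℝ | ∃ f : H, f ∈ Submodule.span ℝ (Set.range k) ∧ ‖f‖ ≤ μ ∧
          (1 / (n : ℝ)) * ∑ i, ⟪f, k i⟫ ^ 2 ≤ r ∧
          x = (∑ i, (if σ i then (1 : ℝ) else -1) * ⟪f, k (Y i)⟫) / (u : ℝ)})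
      / ((n : ℝ) ^ u * 2 ^ u)
      ≤ (∑ Y : Fin u → Fin n, ∑ σ : Fin u → Bool,
          (Real.sqrt r * Real.sqrt (A Y σ) + μ * Real.sqrt (B Y σ)))
        / ((n : ℝ) ^ u * 2 ^ u) := by
        gcongr with Y hY σ hσ
        exact hpoint Y σ
    _ = Real.sqrt r * ((∑ Y : Fin u → Fin n, ∑ σ : Fin u → Bool, Real.sqrt (A Y σ))
          / ((n:ℝ) ^ u * 2 ^ u))
        + μ * ((∑ Y : Fin u → Fin n, ∑ σ : Fin u → Bool, Real.sqrt (B Y σ))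
          / ((n:ℝ) ^ u * 2 ^ u)) := by
        rw [← mul_div_assoc, ← mul_div_assoc, ← add_div]
        congr 1
        simp [Finset.sum_add_distrib, Finset.mul_sum]
    _ ≤ Real.sqrt r * Real.sqrt ((∑ Y : Fin u → Fin n, ∑ σ : Fin u → Bool, A Y σ)
          / ((n:ℝ) ^ u * 2 ^ u))
        + μ * Real.sqrt ((∑ Y : Fin u → Fin n, ∑ σ : Fin u → Bool, B Y σ)
          / ((n:ℝ) ^ u * 2 ^ u)) := by
        gcongr
    _ = Real.sqrt (r * Q / u)
        + μ * Real.sqrt ((∑ q ∈ Finset.univ.filter (fun q : Fin n => Q ≤ (q:ℕ)), lam q) / u) := by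
        rw [hEA, hEB]
        congr 1
        rw [mul_div_assoc, Real.sqrt_mul hr.le]
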